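/- Let N ≥ 1, L ∈ ℤ, and g : ℤ → ℂ with g(x) = 0 for all x < L. Fix x ∈ ℤ^N, an integer vector a = (a_1,…,a_N), and A ∈ ℤ. Then ∑_{z ∈ W_N with z_N < A} det[ ∇^{j−a_i} g(z_j − x_i) ]_{i,j=1}^N = det[ ∇^{j−1−a_i} g(A − x_i) ]_{i,j=1}^N, where only finitely many terms of the sum are nonzero. -/

import Mathlib

open MeasureTheory ProbabilityTheory Complex
open scoped Real BigOperators Nat

noncomputable section

/-- Forward difference operator `∇f(x) = f(x+1) − f(x)`. -/
def nab (f : ℤ → ℂ) : ℤ → ℂ := fun x => f (x + 1) - f x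

/-- Inverse difference: `∇⁻¹f(x) = ∑_{y<x} f(y)` (a `tsum`; for functions vanishing
to the left of some integer this is the finite sum of the paper). -/
def nabInv (f : ℤ → ℂ) : ℤ → ℂ := fun x => ∑' y : {y : ℤ // y < x}, f y.1

/-- `∇^k` for `k : ℤ`. -/
def nabIter (k : ℤ) (f : ℤ → ℂ) : ℤ → ℂ :=
  if 0 ≤ k then nab^[k.toNat] f else nabInv^[(-k).toNat] f

/-- The negative binomial weight `w_m(x)`. -/
def wgt (q : ℝ) (m : ℕ) : ℤ → ℂ := fun x =>
  if 0 ≤ x then ((x.toNat + m - 1).choose x.toNat : ℂ) * ((1 : ℂ) - (q : ℂ)) ^ m * (q : ℂ) ^ x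
  else 0

/-- Component `x_k` (1-based) of a vector `x : Fin N → ℤ`. -/
def vcomp {N : ℕ} (x : Fin N → ℤ) (k : ℕ) : ℤ :=
  if h : k - 1 < N then x ⟨k - 1, h⟩ else 0

/-- 1-based access to a finite tuple, extended by `0` out of range. -/
def fext {d : ℕ} {α : Type*} [Zero α] (x : Fin d → α) : ℕ → α := fun k =>
  if h : 1 ≤ k ∧ k ≤ d then x ⟨k - 1, by omega⟩ else 0

/-- The growth function `𝐆(m,n)` built from weights `w`. -/
def growth (w : ℕ → ℕ → ℕ) : ℕ → ℕ → ℕ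
  | 0, _ => 0
  | _ + 1, 0 => 0
  | m + 1, n + 1 => max (growth w m (n + 1)) (growth w (m + 1) n) + w (m + 1) (n + 1)
  termination_by m n => m + n

/-- Normalized contour integral `(1/(2πi)) ∮_{|z−c|=R} f(z) dz` (counterclockwise circle). -/
def cint (c : ℂ) (R : ℝ) (f : ℂ → ℂ) : ℂ :=
  (2 * Real.pi * Complex.I)⁻¹ * (∮ z in C(c, R), f z)

/-- Iterated normalized contour integrals with centers `c` and radii `R`. -/
def multiCintC : (k : ℕ) → (c : Fin k → ℂ) → (R : Fin k → ℝ) → ((Fin k → ℂ) → ℂ) → ℂ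
  | 0, _, _, f => f ![]
  | k + 1, c, R, f =>
      cint (c 0) (R 0) fun z =>
        multiCintC k (fun t => c t.succ) (fun t => R t.succ) fun w => f (Fin.cons z w)

/-- `G*(w | n, m, a)`. -/
def Gstar (q : ℝ) (n m a : ℤ) (w : ℂ) : ℂ :=
  w ^ n * (1 - w) ^ (a + m) / (1 - w / (1 - (q : ℂ))) ^ m

/-- `G(w | n, m, a) = G*(w | n,m,a)/G*(1−√q | n,m,a)`. -/
def Gfun (q : ℝ) (n m a : ℤ) (w : ℂ) : ℂ :=
  Gstar q n m a w / Gstar q n m a (1 - (Real.sqrt q : ℂ))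

/-- The block index `r` such that `n_{r−1} < i ≤ n_r`. -/
def blockIdx (n : ℕ → ℕ) (i : ℕ) : ℕ := sInf {r : ℕ | i ≤ n r}

/-- `r* = min{r, p−1}` for the block of `i`. -/
def rstar (p : ℕ) (n : ℕ → ℕ) (i : ℕ) : ℕ := min (blockIdx n i) (p - 1)

/-- `m(i) = m_{r*}`. -/
def mOf (p : ℕ) (n m : ℕ → ℕ) (i : ℕ) : ℕ := m (rstar p n i)

/-- `a(i) = a_{r*}`. -/
def aOf (p : ℕ) (n : ℕ → ℕ) (a : ℕ → ℤ) (i : ℕ) : ℤ := a (rstar p n i)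

/-- `n(i) = n_{r*}`. -/
def nOf (p : ℕ) (n : ℕ → ℕ) (i : ℕ) : ℕ := n (rstar p n i)


namespace S3aux

lemma int_Ico_succ_right (a b : ℤ) : Finset.Ico a (b + 1) = Finset.Icc a b := by
  ext t; simp [Finset.mem_Ico, Finset.mem_Icc]

lemma int_Ico_insert (c u : ℤ) (h : c ≤ u) :
    Finset.Ico c (u + 1) = insert u (Finset.Ico c u) := by
  ext t; simp [Finset.mem_Ico, Finset.mem_insert]; omega

lemma sum_Ico_split (f : ℤ → ℂ) {a b c : ℤ} (hab : a ≤ b) (hbc : b ≤ c) :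
    ∑ t ∈ Finset.Ico a c, f t
      = (∑ t ∈ Finset.Ico a b, f t) + ∑ t ∈ Finset.Ico b c, f t := by
  rw [← Finset.Ico_union_Ico_eq_Ico hab hbc, Finset.sum_union]
  exact Finset.Ico_disjoint_Ico_consecutive a b c

lemma sum_Ico_nab (f : ℤ → ℂ) {c u : ℤ} (h : c ≤ u) :
    ∑ t ∈ Finset.Ico c u, (f (t + 1) - f t) = f u - f c := by
  refine Int.le_induction (motive := fun u _ => ∑ t ∈ Finset.Ico c u, (f (t + 1) - f t) = f u - f c)
    ?_ ?_ u h
  · simp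
  · intro u hu ih
    rw [int_Ico_insert c u hu, Finset.sum_insert (by simp), ih]
    ring

lemma nabInv_eq_sum (f : ℤ → ℂ) (B : ℤ) (hf : ∀ t < B, f t = 0) (u : ℤ) :
    nabInv f u = ∑ t ∈ Finset.Ico B u, f t := by
  rw [nabInv]
  have h0 : (∑' y : {y : ℤ // y < u}, f y.1)
      = ∑' y : ({y : ℤ | y < u} : Set ℤ), f y.1 := rfl
  rw [h0, tsum_subtype {y : ℤ | y < u} f]
  rw [tsum_eq_sum (s := Finset.Ico B u) ?_]
  · refine Finset.sum_congr rfl fun t ht => ?_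
    have : t < u := (Finset.mem_Ico.mp ht).2
    simp [Set.indicator, this]
  · intro t ht
    by_cases h : t < u
    · have : t < B := by
        by_contra hc
        exact ht (Finset.mem_Ico.mpr ⟨le_of_not_gt hc, h⟩)
      simp [Set.indicator, h, hf t this]
    · simp [Set.indicator, h]

lemma nabInv_vanish {f : ℤ → ℂ} {B : ℤ} (hf : ∀ t < B, f t = 0) :
    ∀ t < B, nabInv f t = 0 := by
  intro t ht
  rw [nabInv_eq_sum f B hf, Finset.Ico_eq_empty (by omega), Finset.sum_empty]

lemma nab_iterate_vanish {g : ℤ → ℂ} {L : ℤ} (hg : ∀ t < L, g t = 0) :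
    ∀ n : ℕ, ∀ t < L - n, (nab^[n] g) t = 0 := by
  intro n
  induction n with
  | zero => simpa using hg
  | succ n ih =>
      intro t ht
      rw [Function.iterate_succ', Function.comp_apply]
      have h1 : (nab^[n] g) (t + 1) = 0 := ih _ (by push_cast at ht ⊢; omega)
      have h2 : (nab^[n] g) t = 0 := ih _ (by push_cast at ht ⊢; omega)
      simp [nab, h1, h2]

lemma nabInv_iterate_vanish {g : ℤ → ℂ} {L : ℤ} (hg : ∀ t < L, g t = 0) :
    ∀ n : ℕ, ∀ t < L, (nabInv^[n] g) t = 0 := by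
  intro n
  induction n with
  | zero => simpa using hg
  | succ n ih =>
      rw [Function.iterate_succ']
      exact fun t ht => nabInv_vanish ih t ht

lemma nabIter_vanish {g : ℤ → ℂ} {L : ℤ} (hg : ∀ t < L, g t = 0) (k : ℤ) :
    ∀ t < L - max k 0, nabIter k g t = 0 := by
  intro t ht
  rw [nabIter]
  by_cases h : 0 ≤ k
  · rw [if_pos h]
    rw [max_eq_left h] at ht
    exact nab_iterate_vanish hg k.toNat t (by omega)
  · rw [if_neg h]
    rw [max_eq_right (by omega : k ≤ 0)] at ht
    exact nabInv_iterate_vanish hg _ t (by omega)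

lemma nabInv_nab {f : ℤ → ℂ} {B : ℤ} (hf : ∀ t < B, f t = 0) :
    nabInv (nab f) = f := by
  funext u
  have hvan : ∀ t < B - 1, nab f t = 0 := by
    intro t ht
    simp [nab, hf t (by omega), hf (t + 1) (by omega)]
  rw [nabInv_eq_sum (nab f) (B - 1) hvan]
  rcases le_or_gt (B - 1) u with h | h
  · rw [show (∑ t ∈ Finset.Ico (B-1) u, nab f t)
        = ∑ t ∈ Finset.Ico (B-1) u, (f (t+1) - f t) from rfl, sum_Ico_nab f h,
      hf (B-1) (by omega), sub_zero]
  · rw [Finset.Ico_eq_empty (by omega), Finset.sum_empty, hf u (by omega)]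

lemma nabInv_nabIter {g : ℤ → ℂ} {L : ℤ} (hg : ∀ t < L, g t = 0) (k : ℤ) :
    nabInv (nabIter (k + 1) g) = nabIter k g := by
  rcases le_or_gt 0 k with h | h
  · have h1 : nabIter (k + 1) g = nab (nabIter k g) := by
      rw [nabIter, nabIter, if_pos h, if_pos (by omega)]
      rw [show (k+1).toNat = k.toNat + 1 by omega, Function.iterate_succ']
      rfl
    rw [h1, nabInv_nab (nabIter_vanish hg k)]
  · have hL : nabIter k g = nabInv^[(-k).toNat] g := by
      rw [nabIter, if_neg (by omega)]
    have hR : nabIter (k + 1) g = nabInv^[(-(k+1)).toNat] g := by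
      rw [nabIter]
      by_cases h0 : 0 ≤ k + 1
      · rw [if_pos h0, show (k+1).toNat = 0 by omega, show (-(k+1)).toNat = 0 by omega]
        rfl
      · rw [if_neg h0]
    rw [hL, hR, show (-k).toNat = (-(k+1)).toNat + 1 by omega, Function.iterate_succ']
    rfl

end S3aux

section Step2
open Finset

variable {R : Type*} [CommRing R]

lemma det_updateColumn_finset_sum {N : ℕ} (M : Matrix (Fin N) (Fin N) R) (j : Fin N)
    {ι : Type*} (s : Finset ι) (v : ι → Fin N → R) :
    Matrix.det (M.updateCol j (fun i => ∑ t ∈ s, v t i))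
      = ∑ t ∈ s, Matrix.det (M.updateCol j (v t)) := by
  classical
  induction s using Finset.induction_on with
  | empty =>
      simp only [Finset.sum_empty]
      rw [show (fun _ : Fin N => (0:R)) = ((0 : Fin N → R)) from rfl]
      rw [show ((0 : Fin N → R)) = (0 : R) • (0 : Fin N → R) by simp,
        Matrix.det_updateCol_smul]
      simp
  | insert t s' hns ih =>
      have hfun : (fun i => ∑ u ∈ insert t s', v u i)
          = (v t + fun i => ∑ u ∈ s', v u i) := by
        funext i; rw [Finset.sum_insert hns]; rfl
      rw [hfun, Matrix.det_updateCol_add, ih, Finset.sum_insert hns]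

lemma det_updateColumn_sub {N : ℕ} (M : Matrix (Fin N) (Fin N) R) (j : Fin N)
    (u v : Fin N → R) :
    Matrix.det (M.updateCol j (u - v))
      = Matrix.det (M.updateCol j u) - Matrix.det (M.updateCol j v) := by
  rw [sub_eq_add_neg, Matrix.det_updateCol_add,
    show -v = (-1 : R) • v by simp, Matrix.det_updateCol_smul]
  ring

lemma sum_piFinset_snoc {M : Type*} [AddCommMonoid M] (k : ℕ) (S : Finset ℤ)
    (f : (Fin (k + 1) → ℤ) → M) :
    ∑ z ∈ Fintype.piFinset (fun _ : Fin (k + 1) => S), f z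
      = ∑ z' ∈ Fintype.piFinset (fun _ : Fin k => S), ∑ t ∈ S, f (Fin.snoc z' t) := by
  rw [← Finset.sum_product']
  refine Finset.sum_nbij' (fun z => (Fin.init z, z (Fin.last k)))
    (fun p => Fin.snoc p.1 p.2) ?_ ?_ ?_ ?_ ?_
  · intro z hz
    simp only [Fintype.mem_piFinset] at hz
    simp only [Finset.mem_product, Fintype.mem_piFinset]
    exact ⟨fun i => hz _, hz _⟩
  · intro p hp
    simp only [Finset.mem_product, Fintype.mem_piFinset] at hp
    simp only [Fintype.mem_piFinset]
    intro i
    refine Fin.lastCases ?_ ?_ i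
    · simpa using hp.2
    · intro i'; simpa using hp.1 i'
  · intro z hz
    simp [Fin.snoc_init_self]
  · intro p hp
    simp [Fin.init_snoc, Fin.snoc_last]
  · intro z hz
    simp [Fin.snoc_init_self]

lemma monotone_snoc_iff {m : ℕ} (z' : Fin (m + 1) → ℤ) (t : ℤ) :
    Monotone (Fin.snoc z' t : Fin (m + 2) → ℤ) ↔ Monotone z' ∧ z' (Fin.last m) ≤ t := by
  rw [Fin.monotone_iff_le_succ, Fin.monotone_iff_le_succ]
  constructor
  · intro h
    refine ⟨fun i => ?_, ?_⟩
    · have := h i.castSucc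
      rwa [Fin.snoc_castSucc, Fin.succ_castSucc, Fin.snoc_castSucc] at this
    · have := h (Fin.last m)
      rwa [Fin.snoc_castSucc, Fin.succ_last, Fin.snoc_last] at this
  · rintro ⟨h1, h2⟩ i
    refine Fin.lastCases ?_ ?_ i
    · rwa [Fin.snoc_castSucc, Fin.succ_last, Fin.snoc_last]
    · intro i'
      rw [Fin.snoc_castSucc, Fin.succ_castSucc, Fin.snoc_castSucc]
      exact h1 i'

end Step2

namespace S3aux
open Finset

lemma matrix_snoc_eq {N k : ℕ} (hkN : k < N) (H : Fin N → Fin (N + 1) → ℤ → ℂ)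
    (A t : ℤ) (z' : Fin k → ℤ) :
    (Matrix.of fun i (j : Fin N) =>
        if h : (j : ℕ) < k + 1 then H i j.succ ((Fin.snoc z' t : Fin (k+1) → ℤ) ⟨j.1, h⟩)
        else H i j.castSucc A)
      = (Matrix.of fun i (j : Fin N) =>
          if h : (j : ℕ) < k then H i j.succ (z' ⟨j.1, h⟩)
          else H i j.castSucc A).updateCol ⟨k, hkN⟩
            (fun i => H i (⟨k, hkN⟩ : Fin N).succ t) := by
  ext i j
  rw [Matrix.updateCol_apply]
  by_cases hj : j = (⟨k, hkN⟩ : Fin N)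
  · subst hj
    rw [if_pos rfl]
    simp only [Matrix.of_apply]
    rw [dif_pos (by simp : ((⟨k, hkN⟩ : Fin N) : ℕ) < k + 1)]
    congr 1
    have h1 : (⟨((⟨k, hkN⟩ : Fin N) : ℕ), by simp⟩ : Fin (k + 1)) = Fin.last k := by
      ext; rfl
    rw [h1, Fin.snoc_last]
  · rw [if_neg hj]
    simp only [Matrix.of_apply]
    by_cases hjk : (j : ℕ) < k
    · rw [dif_pos (by omega), dif_pos hjk]
      congr 1
      have h1 : (⟨(j : ℕ), by omega⟩ : Fin (k + 1)) = Fin.castSucc ⟨(j : ℕ), hjk⟩ := rfl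
      rw [h1, Fin.snoc_castSucc]
    · have hne : (j : ℕ) ≠ k := fun h => hj (Fin.ext h)
      rw [dif_neg (by omega), dif_neg hjk]

open scoped Classical in
lemma key (N : ℕ) (H : Fin N → Fin (N + 1) → ℤ → ℂ) (B A : ℤ) (hBA : B ≤ A)
    (hrel : ∀ (i : Fin N) (j : Fin N) (u : ℤ),
      H i j.castSucc u = ∑ t ∈ Finset.Ico B u, H i j.succ t) :
    ∀ k : ℕ, k ≤ N →
    (∑ z ∈ Fintype.piFinset (fun _ : Fin k => Finset.Icc B (A - 1)),
      (if Monotone z then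
        Matrix.det (Matrix.of fun i (j : Fin N) =>
          if h : (j : ℕ) < k then H i j.succ (z ⟨j.1, h⟩) else H i j.castSucc A)
       else 0))
      = Matrix.det (Matrix.of fun i (j : Fin N) => H i j.castSucc A) := by
  intro k
  induction k with
  | zero =>
      intro _
      have h1 : ∀ z : Fin 0 → ℤ, Monotone z := fun z a => a.elim0
      calc ∑ z ∈ Fintype.piFinset (fun _ : Fin 0 => Finset.Icc B (A - 1)),
            (if Monotone z then
              Matrix.det (Matrix.of fun i (j : Fin N) =>
                if h : (j : ℕ) < 0 then H i j.succ (z ⟨j.1, h⟩) else H i j.castSucc A)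
             else 0)
          = ∑ _z ∈ Fintype.piFinset (fun _ : Fin 0 => Finset.Icc B (A - 1)),
              Matrix.det (Matrix.of fun i (j : Fin N) => H i j.castSucc A) := by
            refine Finset.sum_congr rfl fun z _ => ?_
            rw [if_pos (h1 z)]
            refine congrArg Matrix.det ?_
            ext i j
            rw [Matrix.of_apply, Matrix.of_apply, dif_neg (by omega)]
        _ = Matrix.det (Matrix.of fun i (j : Fin N) => H i j.castSucc A) := by
            rw [Finset.sum_const, Fintype.card_piFinset]
            simp
  | succ k ih =>
      intro hk
      have hkN : k < N := by omega
      have ihk := ih (by omega)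
      set jk : Fin N := ⟨k, hkN⟩ with hjk
      refine Eq.trans (sum_piFinset_snoc k (Finset.Icc B (A - 1)) fun z =>
        if Monotone z then
          Matrix.det (Matrix.of fun i (j : Fin N) =>
            if h : (j : ℕ) < k + 1 then H i j.succ (z ⟨j.1, h⟩) else H i j.castSucc A)
        else 0) ?_
      rw [← ihk]
      refine Finset.sum_congr rfl fun z' hz' => ?_
      -- common: update-to-A column gives back the base matrix
      have hupdA :
          ((Matrix.of fun i (j : Fin N) =>
            if h : (j : ℕ) < k then H i j.succ (z' ⟨j.1, h⟩)
            else H i j.castSucc A).updateCol jk (fun i => H i jk.castSucc A))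
          = (Matrix.of fun i (j : Fin N) =>
            if h : (j : ℕ) < k then H i j.succ (z' ⟨j.1, h⟩)
            else H i j.castSucc A) := by
        ext i j
        rw [Matrix.updateCol_apply]
        by_cases hj : j = jk
        · subst hj
          rw [if_pos rfl]
          simp only [Matrix.of_apply]
          rw [dif_neg (by simp [hjk])]
        · rw [if_neg hj]
      have hsum_col : ∀ (i : Fin N) (c : ℤ), c ≤ A →
          ∑ t ∈ Finset.Ico (max B c) A, H i jk.succ t
            = H i jk.castSucc A - H i jk.castSucc c := by
        intro i c hc
        have hmax : max B c ≤ A := max_le hBA hc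
        have hsplit := sum_Ico_split (H i jk.succ) (le_max_left B c) hmax
        have h2 : H i jk.castSucc (max B c) = H i jk.castSucc c := by
          rcases le_or_gt B c with h | h
          · rw [max_eq_right h]
          · rw [max_eq_left h.le, hrel, hrel, Finset.Ico_self,
              Finset.Ico_eq_empty (by omega)]
        rw [← hrel, ← hrel, h2] at hsplit
        -- hsplit : H i jk.castSucc A = H i jk.castSucc c + ∑ ...
        linear_combination -hsplit
      rcases k with _ | m
      · -- k = 0 : single free column
        have hmono1 : ∀ f : Fin 1 → ℤ, Monotone f :=
          fun f a b _ => le_of_eq (congrArg f (Subsingleton.elim a b))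
        have hmono0 : Monotone z' := fun a _ _ => a.elim0
        rw [if_pos hmono0]
        calc ∑ t ∈ Finset.Icc B (A - 1),
              (if Monotone (Fin.snoc z' t : Fin 1 → ℤ) then
                Matrix.det (Matrix.of fun i (j : Fin N) =>
                  if h : (j : ℕ) < 0 + 1 then H i j.succ ((Fin.snoc z' t : Fin (0+1) → ℤ) ⟨j.1, h⟩)
                  else H i j.castSucc A) else 0)
            = ∑ t ∈ Finset.Icc B (A - 1),
              Matrix.det ((Matrix.of fun i (j : Fin N) =>
                if h : (j : ℕ) < 0 then H i j.succ (z' ⟨j.1, h⟩)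
                else H i j.castSucc A).updateCol jk (fun i => H i jk.succ t)) := by
              refine Finset.sum_congr rfl fun t _ => ?_
              rw [if_pos (hmono1 _), matrix_snoc_eq hkN]
          _ = Matrix.det ((Matrix.of fun i (j : Fin N) =>
                if h : (j : ℕ) < 0 then H i j.succ (z' ⟨j.1, h⟩)
                else H i j.castSucc A).updateCol jk
                  (fun i => ∑ t ∈ Finset.Icc B (A - 1), H i jk.succ t)) :=
              (det_updateColumn_finset_sum _ _ _ _).symm
          _ = Matrix.det (Matrix.of fun i (j : Fin N) =>
                if h : (j : ℕ) < 0 then H i j.succ (z' ⟨j.1, h⟩)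
                else H i j.castSucc A) := by
              rw [show (fun i => ∑ t ∈ Finset.Icc B (A - 1), H i jk.succ t)
                  = (fun i => H i jk.castSucc A) from funext fun i => by
                    rw [show Finset.Icc B (A - 1) = Finset.Ico B A by
                      rw [← int_Ico_succ_right]; congr 1; omega, ← hrel]]
              exact congrArg Matrix.det hupdA
      · -- k = m + 1
        set c : ℤ := z' (Fin.last m) with hc
        have hcA : c ≤ A - 1 := by
          have := Fintype.mem_piFinset.mp hz' (Fin.last m)
          exact (Finset.mem_Icc.mp this).2
        by_cases hmono : Monotone z'
        · rw [if_pos hmono]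
          have hfil : (Finset.Icc B (A - 1)).filter (fun t => c ≤ t)
              = Finset.Ico (max B c) A := by
            ext t
            simp only [Finset.mem_filter, Finset.mem_Icc, Finset.mem_Ico]
            omega
          calc ∑ t ∈ Finset.Icc B (A - 1),
                (if Monotone (Fin.snoc z' t : Fin (m + 2) → ℤ) then
                  Matrix.det (Matrix.of fun i (j : Fin N) =>
                    if h : (j : ℕ) < m + 1 + 1 then H i j.succ ((Fin.snoc z' t : Fin (m+1+1) → ℤ) ⟨j.1, h⟩)
                    else H i j.castSucc A) else 0)
              = ∑ t ∈ Finset.Icc B (A - 1),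
                (if c ≤ t then
                  Matrix.det ((Matrix.of fun i (j : Fin N) =>
                    if h : (j : ℕ) < m + 1 then H i j.succ (z' ⟨j.1, h⟩)
                    else H i j.castSucc A).updateCol jk (fun i => H i jk.succ t))
                 else 0) := by
                refine Finset.sum_congr rfl fun t _ => ?_
                simp only [monotone_snoc_iff]
                rw [← hc]
                by_cases hct : c ≤ t
                · rw [if_pos ⟨hmono, hct⟩, if_pos hct, matrix_snoc_eq hkN]
                · rw [if_neg (by tauto), if_neg hct]
            _ = ∑ t ∈ Finset.Ico (max B c) A,
                  Matrix.det ((Matrix.of fun i (j : Fin N) =>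
                    if h : (j : ℕ) < m + 1 then H i j.succ (z' ⟨j.1, h⟩)
                    else H i j.castSucc A).updateCol jk (fun i => H i jk.succ t)) := by
                rw [← Finset.sum_filter, hfil]
            _ = Matrix.det (Matrix.of fun i (j : Fin N) =>
                  if h : (j : ℕ) < m + 1 then H i j.succ (z' ⟨j.1, h⟩)
                  else H i j.castSucc A) := by
                rw [← det_updateColumn_finset_sum]
                rw [show (fun i => ∑ t ∈ Finset.Ico (max B c) A, H i jk.succ t)
                    = ((fun i => H i jk.castSucc A) - (fun i => H i jk.castSucc c))
                    from funext fun i => by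
                      rw [Pi.sub_apply, hsum_col i c (by omega)]]
                rw [det_updateColumn_sub, hupdA]
                have hdetc : Matrix.det ((Matrix.of fun i (j : Fin N) =>
                    if h : (j : ℕ) < m + 1 then H i j.succ (z' ⟨j.1, h⟩)
                    else H i j.castSucc A).updateCol jk
                      (fun i => H i jk.castSucc c)) = 0 := by
                  have hmN : m < N := by omega
                  have hne : (⟨m, hmN⟩ : Fin N) ≠ jk := by
                    rw [hjk]
                    intro h
                    exact absurd (congrArg Fin.val h) (by simp)
                  have e1 : (⟨m, hmN⟩ : Fin N).succ = jk.castSucc := by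
                    rw [hjk]
                    ext
                    rfl
                  refine Matrix.det_zero_of_column_eq hne (fun i => ?_)
                  rw [Matrix.updateCol_self, Matrix.updateCol_ne hne]
                  simp only [Matrix.of_apply]
                  rw [dif_pos (Nat.lt_succ_self m), e1, hc]
                  congr 1
                rw [hdetc, sub_zero]
        · rw [if_neg hmono]
          refine Finset.sum_eq_zero fun t _ => ?_
          rw [if_neg (fun hmo => hmono (by
            have := (monotone_snoc_iff z' t).mp hmo
            exact this.1))]

end S3aux


/-- (Identity (3.5) of Lemma `lem:sbp`.)  The sum over `z ∈ W_N` with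
`z_N < A` of `det[∇^{j−a_i} g(z_j − x_i)]` telescopes to `det[∇^{j−1−a_i} g(A − x_i)]`;
only finitely many terms of the sum are nonzero. -/
theorem statement3
    (N : ℕ) (hN : 1 ≤ N) (L : ℤ) (g : ℤ → ℂ)
    (hg : ∀ x : ℤ, x < L → g x = 0)
    (x : Fin N → ℤ) (a : ℕ → ℤ) (A : ℤ) :
    (Function.support (fun zv : {zv : Fin N → ℤ // Monotone zv ∧ vcomp zv N < A} =>
        Matrix.det (Matrix.of fun i j : Fin N =>
          nabIter (((j.1 : ℤ) + 1) - a (i.1 + 1)) g (zv.1 j - x i)))).Finite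
    ∧ (∑' zv : {zv : Fin N → ℤ // Monotone zv ∧ vcomp zv N < A},
        Matrix.det (Matrix.of fun i j : Fin N =>
          nabIter (((j.1 : ℤ) + 1) - a (i.1 + 1)) g (zv.1 j - x i)))
      = Matrix.det (Matrix.of fun i j : Fin N =>
          nabIter ((j.1 : ℤ) - a (i.1 + 1)) g (A - x i)) := by
  classical
  set H : Fin N → Fin (N + 1) → ℤ → ℂ :=
    fun i j u => nabIter ((j : ℤ) - a (i.1 + 1)) g (u - x i) with hH
  have hHapp : ∀ (i : Fin N) (j : Fin (N + 1)) (u : ℤ),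
      H i j u = nabIter ((j : ℤ) - a (i.1 + 1)) g (u - x i) := fun _ _ _ => rfl
  have hne : (Finset.univ : Finset (Fin N × Fin (N + 1))).Nonempty :=
    ⟨(⟨0, hN⟩, ⟨0, Nat.succ_pos N⟩), Finset.mem_univ _⟩
  set B : ℤ := Finset.univ.inf' hne
    (fun p : Fin N × Fin (N + 1) =>
      x p.1 + (L - max ((p.2 : ℤ) - a (p.1.1 + 1)) 0)) with hB
  have hBle : ∀ (i : Fin N) (j : Fin (N + 1)),
      B ≤ x i + (L - max ((j : ℤ) - a (i.1 + 1)) 0) :=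
    fun i j => Finset.inf'_le _ (Finset.mem_univ (i, j))
  have hvan : ∀ (i : Fin N) (j : Fin (N + 1)) (t : ℤ), t < B → H i j t = 0 := by
    intro i j t ht
    rw [hHapp]
    refine S3aux.nabIter_vanish hg _ _ ?_
    have := hBle i j
    omega
  -- the discrete fundamental relation between consecutive columns
  have hrel : ∀ (i : Fin N) (j : Fin N) (u : ℤ),
      H i j.castSucc u = ∑ t ∈ Finset.Ico B u, H i j.succ t := by
    intro i j u
    set B' : ℤ := L - max ((j : ℤ) + 1 - a (i.1 + 1)) 0 with hB'
    set F : ℤ → ℂ := nabIter ((j : ℤ) + 1 - a (i.1 + 1)) g with hF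
    have hFvan : ∀ t < B', F t = 0 := by
      intro t ht
      exact S3aux.nabIter_vanish hg _ _ (by omega)
    have hcastval : ((j.castSucc : Fin (N + 1)) : ℤ) = (j : ℤ) := by
      simp
    have hsuccval : ((j.succ : Fin (N + 1)) : ℤ) = (j : ℤ) + 1 := by
      rw [Fin.val_succ]
      push_cast
      ring
    have h1 : H i j.castSucc u = nabInv F (u - x i) := by
      rw [hHapp, hcastval, hF,
        show (j : ℤ) + 1 - a (i.1 + 1) = ((j : ℤ) - a (i.1 + 1)) + 1 by ring,
        S3aux.nabInv_nabIter hg]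
    have h2 : nabInv F (u - x i) = ∑ t ∈ Finset.Ico B' (u - x i), F t :=
      S3aux.nabInv_eq_sum F B' hFvan _
    have hBB' : B ≤ B' + x i := by
      have := hBle i j.succ
      rw [hsuccval] at this
      omega
    have h3 : ∑ t ∈ Finset.Ico B u, H i j.succ t
        = ∑ t ∈ Finset.Ico B u, F (t - x i) := by
      refine Finset.sum_congr rfl fun t _ => ?_
      rw [hHapp, hsuccval, hF]
    have h4 : ∑ t ∈ Finset.Ico B u, F (t - x i)
        = ∑ t ∈ Finset.Ico (B' + x i) u, F (t - x i) := by
      refine (Finset.sum_subset ?_ ?_).symm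
      · intro t ht
        rw [Finset.mem_Ico] at ht ⊢
        omega
      · intro t ht hnt
        rw [Finset.mem_Ico] at ht
        have : t < B' + x i := by
          by_contra hcon
          exact hnt (Finset.mem_Ico.mpr ⟨by omega, ht.2⟩)
        exact hFvan _ (by omega)
    have h5 : ∑ t ∈ Finset.Ico (B' + x i) u, F (t - x i)
        = ∑ y ∈ Finset.Ico B' (u - x i), F y := by
      refine Finset.sum_nbij' (fun t => t - x i) (fun y => y + x i) ?_ ?_ ?_ ?_ ?_ <;>
        (intro t ht) <;>
        first
          | (rw [Finset.mem_Ico] at ht ⊢; omega)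
          | ring
          | rfl
    rw [h1, h2, h3, h4, h5]
  set c0 : Fin N := ⟨0, hN⟩ with hc0
  set lastIdx : Fin N := ⟨N - 1, by omega⟩ with hlastIdx
  have hvcomp : ∀ z : Fin N → ℤ, vcomp z N = z lastIdx := by
    intro z
    rw [vcomp, dif_pos (show N - 1 < N by omega)]
  have hcast0 : ∀ j : Fin N, ((j.1 : ℤ) + 1) = ((j.succ : Fin (N + 1)) : ℤ) := by
    intro j
    rw [Fin.val_succ]
    push_cast
    ring
  have hdet0 : ∀ z : Fin N → ℤ, z c0 < B →
      Matrix.det (Matrix.of fun i j : Fin N =>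
        nabIter (((j.1 : ℤ) + 1) - a (i.1 + 1)) g (z j - x i)) = 0 := by
    intro z hz0
    refine Matrix.det_eq_zero_of_column_eq_zero c0 (fun i => ?_)
    simp only [Matrix.of_apply]
    rw [hcast0 c0]
    exact hvan i c0.succ (z c0) hz0
  set box : Finset (Fin N → ℤ) :=
    Fintype.piFinset (fun _ : Fin N => Finset.Icc B (A - 1)) with hbox
  set sfin : Finset {zv : Fin N → ℤ // Monotone zv ∧ vcomp zv N < A} :=
    box.subtype _ with hsfin
  have hsupp0 : ∀ zv : {zv : Fin N → ℤ // Monotone zv ∧ vcomp zv N < A},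
      zv ∉ sfin →
      Matrix.det (Matrix.of fun i j : Fin N =>
        nabIter (((j.1 : ℤ) + 1) - a (i.1 + 1)) g (zv.1 j - x i)) = 0 := by
    intro zv hzv
    rw [hsfin, Finset.mem_subtype] at hzv
    have hlastA : zv.1 lastIdx < A := by
      have := zv.2.2
      rwa [hvcomp] at this
    have hub : ∀ j, zv.1 j ≤ A - 1 := by
      intro j
      have h1 : zv.1 j ≤ zv.1 lastIdx := zv.2.1 (by
        rw [Fin.le_def]
        have := j.isLt
        simp only [hlastIdx]
        omega)
      omega
    have hex : ∃ j, zv.1 j < B := by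
      by_contra hcon
      push_neg at hcon
      exact hzv (Fintype.mem_piFinset.mpr fun j =>
        Finset.mem_Icc.mpr ⟨hcon j, hub j⟩)
    obtain ⟨j, hj⟩ := hex
    exact hdet0 _ (lt_of_le_of_lt (zv.2.1 (Fin.le_def.mpr (Nat.zero_le _))) hj)
  refine ⟨?_, ?_⟩
  · refine Set.Finite.subset sfin.finite_toSet ?_
    intro zv hzv
    by_contra hns
    exact (Function.mem_support.mp hzv) (hsupp0 zv hns)
  · rw [tsum_eq_sum hsupp0, hsfin]
    refine Eq.trans (Finset.sum_subtype_eq_sum_filter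
      (fun z : Fin N → ℤ => Matrix.det (Matrix.of fun i j : Fin N =>
        nabIter (((j.1 : ℤ) + 1) - a (i.1 + 1)) g (z j - x i)))
      (p := fun zv => Monotone zv ∧ vcomp zv N < A) (s := box)) ?_
    rw [Finset.sum_filter]
    have hstep : ∀ z ∈ box,
        (if Monotone z ∧ vcomp z N < A then
          Matrix.det (Matrix.of fun i j : Fin N =>
            nabIter (((j.1 : ℤ) + 1) - a (i.1 + 1)) g (z j - x i)) else 0)
        = (if Monotone z then
            Matrix.det (Matrix.of fun i (j : Fin N) =>
              if h : (j : ℕ) < N then H i j.succ (z ⟨j.1, h⟩) else H i j.castSucc A)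
           else 0) := by
      intro z hz
      have hA : vcomp z N < A := by
        rw [hvcomp]
        have := (Finset.mem_Icc.mp (Fintype.mem_piFinset.mp hz lastIdx)).2
        omega
      have hmat : (Matrix.of fun i j : Fin N =>
            nabIter (((j.1 : ℤ) + 1) - a (i.1 + 1)) g (z j - x i))
          = (Matrix.of fun i (j : Fin N) =>
            if h : (j : ℕ) < N then H i j.succ (z ⟨j.1, h⟩) else H i j.castSucc A) := by
        ext i j
        rw [Matrix.of_apply, Matrix.of_apply, dif_pos j.isLt, hHapp,
          show (⟨j.1, j.isLt⟩ : Fin N) = j from rfl, hcast0 j]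
      by_cases hm : Monotone z
      · rw [if_pos ⟨hm, hA⟩, if_pos hm, hmat]
      · rw [if_neg (fun hc => hm hc.1), if_neg hm]
    rw [Finset.sum_congr rfl hstep]
    rcases le_or_gt B A with hAB | hAB
    · rw [S3aux.key N H B A hAB hrel N le_rfl]
      congr 1
    · have hempty : box = ∅ := by
        rw [Finset.eq_empty_iff_forall_notMem]
        intro z hz
        have := Finset.mem_Icc.mp (Fintype.mem_piFinset.mp hz c0)
        omega
      rw [hempty, Finset.sum_empty]
      refine (Matrix.det_eq_zero_of_column_eq_zero c0 (fun i => ?_)).symm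
      simp only [Matrix.of_apply]
      have hcol : ((c0.castSucc : Fin (N + 1)) : ℤ) = (c0.1 : ℤ) := by simp
      rw [show ((c0.1 : ℤ) - a (i.1 + 1)) = ((c0.castSucc : Fin (N + 1)) : ℤ) - a (i.1 + 1) by
          rw [hcol], ← hHapp, hrel i c0 A, Finset.Ico_eq_empty (by omega), Finset.sum_empty]


end
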